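/- Let R be a UFD (e.g. K[x₁,...,xₙ] for a field K of characteristic zero), and f, g ∈ R[x] with deg f = d₁ ≥ d₂ = deg g. Let l = leadingCoeff(g), δ = d₁ - d₂, and let q, r satisfy l^(δ+1)·f + q·g = r with deg r < deg g (pseudo-division). If r₁ = content(f) and r₂ = content(g), then r₁ divides q, r₂^(d₁-d₂) divides q, r₁ divides r, and r₂^(d₁-d₂+1) divides r. -/

import Mathlib

open Polynomial

private theorem degree_C_pow_mul_le {R : Type*} [CommSemiring R] (c : R) (n : ℕ)
    (p : Polynomial R) : (C c ^ n * p).degree ≤ p.degree := by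
  rw [← C_pow]
  exact (degree_mul_le _ _).trans
    (by simpa using add_le_add_left (degree_C_le (a := c ^ n)) p.degree)

private theorem pdiv_step {R : Type*} [CommRing R] [IsDomain R] {f g : Polynomial R}
    (hg : g ≠ 0) (hf : f ≠ 0) (hfg : g.degree ≤ f.degree) :
    (C g.leadingCoeff * f
      - C f.leadingCoeff * X ^ (f.natDegree - g.natDegree) * g).degree < f.degree := by
  have hl : g.leadingCoeff ≠ 0 := leadingCoeff_ne_zero.mpr hg
  have hfl : f.leadingCoeff ≠ 0 := leadingCoeff_ne_zero.mpr hf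
  have hle : g.natDegree ≤ f.natDegree := natDegree_le_natDegree hfg
  have h1 : (C g.leadingCoeff * f).degree = f.degree := by
    rw [degree_C_mul hl]
  have h2 : (C f.leadingCoeff * X ^ (f.natDegree - g.natDegree) * g).degree = f.degree := by
    rw [degree_mul, degree_C_mul_X_pow _ hfl, degree_eq_natDegree hg,
      ← Nat.cast_add, Nat.sub_add_cancel hle, degree_eq_natDegree hf]
  have h3 : (C g.leadingCoeff * f).leadingCoeff
      = (C f.leadingCoeff * X ^ (f.natDegree - g.natDegree) * g).leadingCoeff := by
    rw [leadingCoeff_mul, leadingCoeff_mul, leadingCoeff_mul, leadingCoeff_C,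
      leadingCoeff_X_pow, leadingCoeff_C]
    ring
  have := degree_sub_lt (h1.trans h2.symm) (by
    intro h
    rw [h, degree_zero] at h1
    exact hf (degree_eq_bot.mp h1.symm)) h3
  rwa [h1] at this

/-- Existence of pseudo-division with exact exponent. -/
private theorem pdiv_aux {R : Type*} [CommRing R] [IsDomain R] {g : Polynomial R} (hg : g ≠ 0) :
    ∀ N : ℕ, ∀ f : Polynomial R, f.natDegree ≤ N → ∀ n : ℕ,
      f.natDegree - g.natDegree + 1 ≤ n →
      ∃ q r : Polynomial R, C g.leadingCoeff ^ n * f = q * g + r ∧ r.degree < g.degree := by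
  intro N
  induction N with
  | zero =>
    intro f hf n hn
    by_cases hfg : f.degree < g.degree
    · exact ⟨0, C g.leadingCoeff ^ n * f, by ring,
        lt_of_le_of_lt (degree_C_pow_mul_le _ _ _) hfg⟩
    · push_neg at hfg
      have hf0 : f ≠ 0 := fun h => hg (degree_eq_bot.mp
        (le_bot_iff.mp (by rwa [h, degree_zero] at hfg)))
      set f' := C g.leadingCoeff * f - C f.leadingCoeff * X ^ (f.natDegree - g.natDegree) * g
        with hf'
      have hdf' : f'.degree < f.degree := pdiv_step hg hf0 hfg
      have hf'0 : f' = 0 := by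
        have hfd : f.degree ≤ 0 :=
          degree_le_zero_iff.mpr (eq_C_of_natDegree_le_zero hf)
        by_contra h
        exact absurd (lt_of_lt_of_le hdf' hfd) (not_lt.mpr (zero_le_degree_iff.mpr h))
      refine ⟨C g.leadingCoeff ^ (n - 1) * (C f.leadingCoeff * X ^ (f.natDegree - g.natDegree)),
        0, ?_, ?_⟩
      · have hstep : C g.leadingCoeff ^ n * f
            = C g.leadingCoeff ^ (n - 1) * (C g.leadingCoeff * f) := by
          rw [← mul_assoc, ← pow_succ]
          congr 2
          omega
        have hexp : C g.leadingCoeff * f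
            = C f.leadingCoeff * X ^ (f.natDegree - g.natDegree) * g := by
          have := hf'0
          rw [hf', sub_eq_zero] at this
          exact this
        rw [hstep, hexp]
        ring
      · rw [degree_zero]
        exact lt_of_le_of_ne bot_le fun h => hg (degree_eq_bot.mp h.symm)
  | succ N ih =>
    intro f hf n hn
    by_cases hfg : f.degree < g.degree
    · exact ⟨0, C g.leadingCoeff ^ n * f, by ring,
        lt_of_le_of_lt (degree_C_pow_mul_le _ _ _) hfg⟩
    · push_neg at hfg
      have hf0 : f ≠ 0 := fun h => hg (degree_eq_bot.mp
        (le_bot_iff.mp (by rwa [h, degree_zero] at hfg)))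
      have hle : g.natDegree ≤ f.natDegree := natDegree_le_natDegree hfg
      set f' := C g.leadingCoeff * f - C f.leadingCoeff * X ^ (f.natDegree - g.natDegree) * g
        with hf'
      have hdf' : f'.degree < f.degree := pdiv_step hg hf0 hfg
      have hstep : C g.leadingCoeff ^ n * f
          = C g.leadingCoeff ^ (n - 1) * (C g.leadingCoeff * f) := by
        rw [← mul_assoc, ← pow_succ]
        congr 2
        omega
      by_cases hfgd : f'.degree < g.degree
      · refine ⟨C g.leadingCoeff ^ (n - 1) *
          (C f.leadingCoeff * X ^ (f.natDegree - g.natDegree)),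
          C g.leadingCoeff ^ (n - 1) * f', ?_,
          lt_of_le_of_lt (degree_C_pow_mul_le _ _ _) hfgd⟩
        rw [hstep, show C g.leadingCoeff * f
            = f' + C f.leadingCoeff * X ^ (f.natDegree - g.natDegree) * g by rw [hf']; ring,
          mul_add]
        ring
      · push_neg at hfgd
        have hf'0 : f' ≠ 0 := fun h => hg (degree_eq_bot.mp
          (le_bot_iff.mp (by rwa [h, degree_zero] at hfgd)))
        have hlt : f'.natDegree < f.natDegree := natDegree_lt_natDegree hf'0 hdf'
        have hg'le : g.natDegree ≤ f'.natDegree := natDegree_le_natDegree hfgd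
        have hle : g.natDegree ≤ f.natDegree := natDegree_le_natDegree hfg
        obtain ⟨q', r', heq', hr'⟩ := ih f' (by omega) (n - 1) (by omega)
        refine ⟨q' + C g.leadingCoeff ^ (n - 1) *
          (C f.leadingCoeff * X ^ (f.natDegree - g.natDegree)), r', ?_, hr'⟩
        rw [hstep, show C g.leadingCoeff * f
            = f' + C f.leadingCoeff * X ^ (f.natDegree - g.natDegree) * g by rw [hf']; ring,
          mul_add, heq']
        ring

/-- Uniqueness of division with remainder mod a fixed `g`. -/
private theorem pdiv_unique {R : Type*} [CommRing R] [IsDomain R] {g a b c d : Polynomial R}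
    (hg : g ≠ 0) (h : a * g + b = c * g + d) (hb : b.degree < g.degree)
    (hd : d.degree < g.degree) : a = c ∧ b = d := by
  have key : (a - c) * g = d - b := by linear_combination h
  have hac : a - c = 0 := by
    by_contra h0
    have h1 : ((a - c) * g).degree = (a - c).degree + g.degree := degree_mul
    have h2 : g.degree ≤ ((a - c) * g).degree := by
      rw [h1]
      exact le_add_of_nonneg_left (zero_le_degree_iff.mpr h0)
    have h3 : (d - b).degree < g.degree :=
      lt_of_le_of_lt (degree_sub_le _ _) (max_lt hd hb)
    rw [key] at h2
    exact absurd h2 (not_le.mpr h3)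
  have hac' : a = c := sub_eq_zero.mp hac
  have hbd : d - b = 0 := by rw [← key, hac, zero_mul]
  exact ⟨hac', (sub_eq_zero.mp hbd).symm⟩

private theorem degree_C_mul_le' {R : Type*} [CommSemiring R] (c : R) (p : Polynomial R) :
    (C c * p).degree ≤ p.degree := by
  simpa using degree_C_pow_mul_le c 1 p

/-- In a UFD `R`, for pseudo-division `l^(δ+1)·f + q·g = r` with `deg r < deg g`,
if `r₁ = content f` and `r₂ = content g`, then `r₁ ∣ q`, `r₂^(d₁-d₂) ∣ q`,
`r₁ ∣ r` and `r₂^(d₁-d₂+1) ∣ r` (coefficientwise, i.e. as constant polynomials). -/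
theorem content_divides_pseudo_division {R : Type*} [CommRing R] [IsDomain R]
    [UniqueFactorizationMonoid R] [NormalizedGCDMonoid R]
    (f g q r : Polynomial R) (hg : g ≠ 0)
    (hdeg : g.natDegree ≤ f.natDegree)
    (heq : Polynomial.C g.leadingCoeff ^ (f.natDegree - g.natDegree + 1) * f + q * g = r)
    (hr : r.degree < g.degree) :
    Polynomial.C f.content ∣ q ∧
    Polynomial.C (g.content ^ (f.natDegree - g.natDegree)) ∣ q ∧
    Polynomial.C f.content ∣ r ∧
    Polynomial.C (g.content ^ (f.natDegree - g.natDegree + 1)) ∣ r := by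
  set n := f.natDegree - g.natDegree + 1 with hn
  have hgc : g.content ≠ 0 := fun h => hg (content_eq_zero_iff.mp h)
  have hCgc : (C g.content : Polynomial R) ≠ 0 := fun h => hgc (C_eq_zero.mp h)
  -- Part 1 & 3 : divisibility by content f
  obtain ⟨q₁, r₁', heq₁, hr₁⟩ := pdiv_aux hg f.primPart.natDegree f.primPart le_rfl n
    (by rw [natDegree_primPart])
  have e1 : (C f.content * q₁) * g + C f.content * r₁' = (-q) * g + r := by
    have hf : f = C f.content * f.primPart := f.eq_C_content_mul_primPart
    calc (C f.content * q₁) * g + C f.content * r₁'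
        = C f.content * (q₁ * g + r₁') := by ring
      _ = C f.content * (C g.leadingCoeff ^ n * f.primPart) := by rw [heq₁]
      _ = C g.leadingCoeff ^ n * (C f.content * f.primPart) := by ring
      _ = (-q) * g + r := by rw [← hf]; linear_combination heq
  obtain ⟨hq1, hr1⟩ := pdiv_unique hg e1
    (lt_of_le_of_lt (degree_C_mul_le' _ _) hr₁) hr
  -- Part 2 & 4 : divisibility by powers of content g
  have hg₁ : g.primPart ≠ 0 := g.primPart_ne_zero
  have hl : C g.leadingCoeff = C g.content * C g.primPart.leadingCoeff := by
    rw [← C_mul]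
    congr 1
    conv_lhs => rw [g.eq_C_content_mul_primPart]
    rw [leadingCoeff_mul, leadingCoeff_C]
  obtain ⟨q₂, r₂', heq₂, hr₂⟩ := pdiv_aux hg₁ f.natDegree f le_rfl n
    (by rw [natDegree_primPart])
  have hdg : r.degree < g.primPart.degree := by
    rwa [degree_eq_natDegree hg₁, natDegree_primPart, ← degree_eq_natDegree hg]
  have e2 : (C g.content ^ n * q₂) * g.primPart + C g.content ^ n * r₂'
      = (-q * C g.content) * g.primPart + r := by
    calc (C g.content ^ n * q₂) * g.primPart + C g.content ^ n * r₂'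
        = C g.content ^ n * (q₂ * g.primPart + r₂') := by ring
      _ = C g.content ^ n * (C g.primPart.leadingCoeff ^ n * f) := by rw [heq₂]
      _ = C g.leadingCoeff ^ n * f := by rw [hl, mul_pow]; ring
      _ = (-q * C g.content) * g.primPart + r := by
          have hgG : g = C g.content * g.primPart := g.eq_C_content_mul_primPart
          calc C g.leadingCoeff ^ n * f = (-q) * g + r := by linear_combination heq
            _ = (-q * C g.content) * g.primPart + r := by linear_combination (-q) * hgG
  obtain ⟨hq2, hr2⟩ := pdiv_unique hg₁ e2
    (lt_of_le_of_lt (by rw [← C_pow]; exact degree_C_mul_le' _ _) hr₂) hdg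
  have hq2' : C g.content * (C g.content ^ (f.natDegree - g.natDegree) * q₂)
      = C g.content * (-q) := by
    calc C g.content * (C g.content ^ (f.natDegree - g.natDegree) * q₂)
        = C g.content ^ n * q₂ := by rw [hn]; ring
      _ = -q * C g.content := hq2
      _ = C g.content * (-q) := by ring
  have hq2'' := mul_left_cancel₀ hCgc hq2'
  refine ⟨⟨-q₁, by linear_combination hq1⟩, ⟨-q₂, ?_⟩, ⟨r₁', hr1.symm⟩, ⟨r₂', ?_⟩⟩
  · rw [map_pow]
    linear_combination hq2''
  · rw [map_pow]
    exact hr2.symm
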